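/- Let h ∈ ℝ^n and let g ∈ cone(h), i.e. g = Σ_{α ∈ J} b_α · Π_{i=1}^n (X_i − h_i)^{2 α_i} with J ⊆ ℕ^n finite and b_α ≥ 0 for every α ≠ 0. Then h is a continuous minimizer of g and round(h) is an integer minimizer of g: g(h) ≤ g(x) for all x ∈ ℝ^n, and g(round(h)) ≤ g(x) for all x ∈ ℤ^n. -/
import Mathlib


open MvPolynomial Finset

/-- `g ∈ cone(h)`: a conic combination of monomials with even exponents
shifted by `h` (the constant coefficient `b 0` may be arbitrary). -/
def MemCone {n : ℕ} (h : Fin n → ℝ) (g : MvPolynomial (Fin n) ℝ) : Prop :=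
  ∃ (J : Finset (Fin n → ℕ)) (b : (Fin n → ℕ) → ℝ),
    (∀ α ∈ J, α ≠ 0 → 0 ≤ b α) ∧
    g = ∑ α ∈ J, MvPolynomial.C (b α) *
      ∏ i, (MvPolynomial.X i - MvPolynomial.C (h i)) ^ (2 * α i)

theorem cone_minimizers
    {n : ℕ} (h : Fin n → ℝ) (g : MvPolynomial (Fin n) ℝ)
    (hg : MemCone h g) :
    (∀ x : Fin n → ℝ, eval h g ≤ eval x g) ∧
    (∀ x : Fin n → ℤ,
      eval (fun i => (round (h i) : ℝ)) g ≤ eval (fun i => (x i : ℝ)) g) := by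
  obtain ⟨J, b, hb, rfl⟩ := hg
  have heval : ∀ y : Fin n → ℝ,
      eval y (∑ α ∈ J, MvPolynomial.C (b α) *
        ∏ i, (MvPolynomial.X i - MvPolynomial.C (h i)) ^ (2 * α i))
      = ∑ α ∈ J, b α * ∏ i, (y i - h i) ^ (2 * α i) := by
    intro y
    simp [eval_sum]
  constructor
  · intro x
    rw [heval, heval]
    apply Finset.sum_le_sum
    intro α hα
    by_cases h0 : α = 0
    · subst h0; simp
    · have hprod0 : (∏ i, (h i - h i) ^ (2 * α i)) = 0 := by
        obtain ⟨i, hi⟩ := Function.ne_iff.mp h0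
        apply Finset.prod_eq_zero (Finset.mem_univ i)
        simp only [sub_self]
        exact zero_pow (by simpa using hi)
      rw [hprod0, mul_zero]
      apply mul_nonneg (hb α hα h0)
      exact Finset.prod_nonneg fun i _ => Even.pow_nonneg (even_two_mul _) _
  · intro x
    rw [heval, heval]
    apply Finset.sum_le_sum
    intro α hα
    by_cases h0 : α = 0
    · subst h0; simp
    · apply mul_le_mul_of_nonneg_left _ (hb α hα h0)
      apply Finset.prod_le_prod
      · intro i _; exact Even.pow_nonneg (even_two_mul _) _
      · intro i _
        have key : |(round (h i) : ℝ) - h i| ≤ |(x i : ℝ) - h i| := by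
          have := round_le (h i) (x i)
          rwa [abs_sub_comm (h i), abs_sub_comm (h i)] at this
        calc ((round (h i) : ℝ) - h i) ^ (2 * α i)
            = |(round (h i) : ℝ) - h i| ^ (2 * α i) := by
              rw [← abs_pow, abs_of_nonneg (Even.pow_nonneg (even_two_mul _) _)]
          _ ≤ |(x i : ℝ) - h i| ^ (2 * α i) := by
              exact pow_le_pow_left₀ (abs_nonneg _) key _
          _ = ((x i : ℝ) - h i) ^ (2 * α i) := by
              rw [← abs_pow, abs_of_nonneg (Even.pow_nonneg (even_two_mul _) _)]
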